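/- Let E/k be Galois with group G, and suppose q, q' are quadrics over E and P a subspace of linear forms such that qq' ≡ σ(q)σ(q') mod (P + σ(P)) for some σ ∈ G. If the ideal (q, P + σ(P)) is prime and q, q' each have slice rank greater than 2·dim(P + σ(P)), then there exists c(σ) ∈ E* such that either σ(q) ≡ c(σ)·q and σ(q') ≡ c(σ)^{-1}·q' mod (P + σ(P)), or σ(q) ≡ c(σ)·q' and σ(q') ≡ c(σ)^{-1}·q mod (P + σ(P)). -/

import Mathlib

open MvPolynomial

/-- `SliceRankLE f r`: the polynomial `f` lies in an ideal generated by `r` linear forms. -/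
def SliceRankLE {k : Type*} [Field k] {n : ℕ} (f : MvPolynomial (Fin n) k) (r : ℕ) : Prop :=
  ∃ l : Fin r → MvPolynomial (Fin n) k,
    (∀ i, (l i).IsHomogeneous 1) ∧ f ∈ Ideal.span (Set.range l)

/-- The slice rank: the minimal number of linear forms whose generated ideal contains `f`. -/
noncomputable def srk {k : Type*} [Field k] {n : ℕ} (f : MvPolynomial (Fin n) k) : ℕ :=
  sInf {r | SliceRankLE f r}

/-- The symmetric matrix associated to a quadratic form (characteristic ≠ 2). -/
noncomputable def assocMatrix {k : Type*} [Field k] {n : ℕ} (q : MvPolynomial (Fin n) k) :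
    Matrix (Fin n) (Fin n) k :=
  fun i j => if i = j then q.coeff (Finsupp.single i 2)
  else (2 : k)⁻¹ * q.coeff (Finsupp.single i 1 + Finsupp.single j 1)

/-- The rank of a quadratic form: the rank of its associated symmetric matrix. -/
noncomputable def qrank {k : Type*} [Field k] {n : ℕ} (q : MvPolynomial (Fin n) k) : ℕ :=
  (assocMatrix q).rank


section Aux
variable {E : Type*} [Field E] {n : ℕ}



/-- A monomial of total degree 1 is a single variable. -/
lemma degree_one_single {σ : Type*} (d : σ →₀ ℕ) (hd : d.degree = 1) :
    ∃ j, d = Finsupp.single j 1 := by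
  classical
  have hne : d.support.Nonempty := by
    rcases Finset.eq_empty_or_nonempty d.support with h | h
    · exfalso
      have : d = 0 := by simpa [Finsupp.support_eq_empty] using h
      simp [this, map_zero] at hd
    · exact h
  obtain ⟨j, hj⟩ := hne
  refine ⟨j, ?_⟩
  have hj1 : d j = 1 := by
    have hle : d j ≤ 1 := by
      calc d j ≤ ∑ i ∈ d.support, d i := Finset.single_le_sum (fun i _ => Nat.zero_le _) hj
      _ = 1 := hd
    have : d j ≠ 0 := Finsupp.mem_support_iff.1 hj
    omega
  have hsupp : ∀ i ∈ d.support, i = j := by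
    intro i hi
    by_contra hij
    have hsub : {i, j} ⊆ d.support := by
      intro x hx
      simp only [Finset.mem_insert, Finset.mem_singleton] at hx
      rcases hx with rfl | rfl <;> assumption
    have := Finset.sum_le_sum_of_subset (f := d) hsub
    rw [Finset.sum_pair hij] at this
    have hi1 : d i ≠ 0 := Finsupp.mem_support_iff.1 hi
    have : d i + d j ≤ 1 := le_trans this (le_of_eq hd)
    omega
  ext i
  rcases eq_or_ne i j with rfl | h
  · simp [hj1]
  · have : i ∉ d.support := fun hi => h (hsupp i hi)
    simp [Finsupp.notMem_support_iff.1 this, Finsupp.single_apply, (Ne.symm h)]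

/-- Expansion of a homogeneous degree-1 polynomial in the variables. -/
lemma homog_one_expand {p : MvPolynomial (Fin n) E} (hp : p.IsHomogeneous 1) :
    p = ∑ j, coeff (Finsupp.single j 1) p • X j := by
  ext d
  rw [coeff_sum]
  simp only [coeff_smul, smul_eq_mul, coeff_X']
  by_cases hd : ∃ j, d = Finsupp.single j 1
  · obtain ⟨j, rfl⟩ := hd
    rw [Finset.sum_eq_single j]
    · simp
    · intro b _ hb
      rw [if_neg, mul_zero]
      intro h
      exact hb (Finsupp.single_left_injective one_ne_zero h)
    · simp
  · rw [hp.coeff_eq_zero, Finset.sum_eq_zero]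
    · intro b _
      rw [if_neg, mul_zero]
      intro h
      exact hd ⟨b, h.symm⟩
    · intro h
      exact hd (degree_one_single d h)




lemma hc_mul_homog (a g : MvPolynomial (Fin n) E) {kk : ℕ}
    (hg : g.IsHomogeneous kk) (m : ℕ) :
    homogeneousComponent (m + kk) (a * g) = homogeneousComponent m a * g := by
  conv_lhs => rw [← sum_homogeneousComponent a, Finset.sum_mul, map_sum]
  have hterm : ∀ i ∈ Finset.range (a.totalDegree + 1),
      homogeneousComponent (m + kk) (homogeneousComponent i a * g)
      = if m = i then homogeneousComponent i a * g else 0 := by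
    intro i _
    have h1 : (homogeneousComponent i a * g) ∈ homogeneousSubmodule (Fin n) E (i + kk) :=
      (homogeneousComponent_isHomogeneous i a).mul hg
    rw [homogeneousComponent_of_mem h1]
    by_cases h : m = i
    · rw [if_pos (by omega), if_pos h]
    · rw [if_neg (by omega), if_neg h]
  rw [Finset.sum_congr rfl hterm, Finset.sum_ite_eq]
  by_cases hm : m ∈ Finset.range (a.totalDegree + 1)
  · rw [if_pos hm]
  · rw [if_neg hm, homogeneousComponent_eq_zero, zero_mul]
    simp only [Finset.mem_range] at hm
    omega

lemma hc_mem_span {d : ℕ} (l : Fin d → MvPolynomial (Fin n) E)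
    (hl : ∀ i, (l i).IsHomogeneous 1) {z : MvPolynomial (Fin n) E}
    (hz : z ∈ Ideal.span (Set.range l)) :
    homogeneousComponent 2 z ∈ Ideal.span (Set.range l) := by
  obtain ⟨c, rfl⟩ := Ideal.mem_span_range_iff_exists_fun.1 hz
  rw [map_sum]
  refine Ideal.sum_mem _ fun i _ => ?_
  rw [show (2 : ℕ) = 1 + 1 from rfl, hc_mul_homog (c i) (l i) (hl i) 1]
  exact Ideal.mul_mem_left _ _ (Ideal.subset_span ⟨i, rfl⟩)

lemma extract_const {d : ℕ} (l : Fin d → MvPolynomial (Fin n) E)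
    (hl : ∀ i, (l i).IsHomogeneous 1) (g f : MvPolynomial (Fin n) E)
    (hg : g.IsHomogeneous 2) (hf : f.IsHomogeneous 2)
    (hmem : f ∈ Ideal.span {g} ⊔ Ideal.span (Set.range l)) :
    ∃ c : E, f - c • g ∈ Ideal.span (Set.range l) := by
  obtain ⟨y, hy, z, hz, hyz⟩ := Submodule.mem_sup.1 hmem
  obtain ⟨a, rfl⟩ := Ideal.mem_span_singleton'.1 hy
  refine ⟨coeff 0 a, ?_⟩
  have h2 : f = coeff 0 a • g + homogeneousComponent 2 z := by
    have hf2 : homogeneousComponent 2 f = f :=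
      by rw [homogeneousComponent_of_mem ((mem_homogeneousSubmodule _ _).2 hf), if_pos rfl]
    conv_lhs => rw [← hf2, ← hyz]
    rw [map_add, show (2 : ℕ) = 0 + 2 from rfl, hc_mul_homog a g hg 0,
      homogeneousComponent_zero, smul_eq_C_mul]
  rw [h2]
  simpa using hc_mem_span l hl hz

lemma span_E_le_ideal {s : Set (MvPolynomial (Fin n) E)} {x : MvPolynomial (Fin n) E}
    (hx : x ∈ Submodule.span E s) : x ∈ Ideal.span s := by
  refine Submodule.span_induction (fun y hy => Ideal.subset_span hy) (Ideal.zero_mem _)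
    (fun y z _ _ hy hz => Ideal.add_mem _ hy hz) ?_ hx
  intro c y _ hy
  rw [smul_eq_C_mul]
  exact Ideal.mul_mem_left _ _ hy




/-- the coefficient-vector linear map on polynomials -/
noncomputable def cvMap : MvPolynomial (Fin n) E →ₗ[E] (Fin n → E) where
  toFun p := fun j => coeff (Finsupp.single j 1) p
  map_add' p q := by funext j; simp [coeff_add]
  map_smul' c p := by funext j; simp [coeff_smul]

/-- the linear form with given coefficient vector -/
noncomputable def toPMap : (Fin n → E) →ₗ[E] MvPolynomial (Fin n) E where
  toFun v := ∑ j, v j • X j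
  map_add' v w := by
    show ∑ j, (v + w) j • X j = ∑ j, v j • X j + ∑ j, w j • X j
    rw [← Finset.sum_add_distrib]
    exact Finset.sum_congr rfl fun j _ => by rw [Pi.add_apply, add_smul]
  map_smul' c v := by
    show ∑ j, (c • v) j • X j = c • ∑ j, v j • X j
    rw [Finset.smul_sum]
    exact Finset.sum_congr rfl fun j _ => by rw [Pi.smul_apply, smul_smul, smul_eq_mul]

lemma toPMap_cvMap {p : MvPolynomial (Fin n) E} (hp : p.IsHomogeneous 1) :
    toPMap (cvMap p) = p := by
  conv_rhs => rw [homog_one_expand hp]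
  rfl

lemma toPMap_single (j : Fin n) : toPMap (Pi.single j (1 : E)) = X j := by
  simp only [toPMap, LinearMap.coe_mk, AddHom.coe_mk]
  rw [Finset.sum_eq_single j]
  · simp
  · intro b _ hb; simp [Pi.single_apply, hb]
  · simp

lemma cvMap_homog_sum (v : Fin n → E) : ∑ j, v j • (Pi.single j (1 : E) : Fin n → E) = v := by
  funext i
  simp [Finset.sum_apply, Pi.single_apply, Finset.sum_ite_eq]

/-- The ideal generated by finitely many linear forms is prime. -/
theorem span_linear_isPrime {d : ℕ} (l : Fin d → MvPolynomial (Fin n) E)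
    (hl : ∀ i, (l i).IsHomogeneous 1) :
    (Ideal.span (Set.range l)).IsPrime := by
  classical
  set W' : Submodule E (Fin n → E) := Submodule.span E (Set.range (fun i => cvMap (l i))) with hW'
  obtain ⟨U, hU⟩ := Submodule.exists_isCompl W'
  set π : (Fin n → E) →ₗ[E] (Fin n → E) := U.subtype ∘ₗ Submodule.projectionOnto U W' hU.symm with hπ
  have hπ0 : ∀ x ∈ W', π x = 0 := by
    intro x hx
    simp [hπ, (Submodule.projectionOnto_apply_eq_zero_iff hU.symm).2 hx]
  have hπW : ∀ x, x - π x ∈ W' := by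
    intro x
    have hx : x ∈ U ⊔ W' := by rw [hU.symm.sup_eq_top]; trivial
    obtain ⟨u, hu, w, hw, rfl⟩ := Submodule.mem_sup.1 hx
    have : π (u + w) = u := by
      rw [map_add, hπ0 w hw, add_zero]
      show U.subtype (Submodule.projectionOnto U W' hU.symm u) = u
      rw [show u = ((⟨u, hu⟩ : U) : Fin n → E) from rfl, Submodule.projectionOnto_apply_left hU.symm]
      rfl
    rw [this]; simpa using hw
  set Φ : MvPolynomial (Fin n) E →ₐ[E] MvPolynomial (Fin n) E :=
    aeval (fun i => toPMap (π (Pi.single i (1:E)))) with hΦ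
  have hΦlin : ∀ p : MvPolynomial (Fin n) E, p.IsHomogeneous 1 → Φ p = toPMap (π (cvMap p)) := by
    intro p hp
    conv_lhs => rw [homog_one_expand hp, map_sum]
    have : ∀ j, Φ (coeff (Finsupp.single j 1) p • X j)
        = toPMap (π (cvMap p j • (Pi.single j (1:E) : Fin n → E))) := by
      intro j
      rw [map_smul, map_smul, map_smul]
      congr 1
      rw [hΦ, aeval_X]
    rw [Finset.sum_congr rfl (fun j _ => this j), ← map_sum, ← map_sum, cvMap_homog_sum]
  have hXmem : ∀ i : Fin n, X i - Φ (X i) ∈ Ideal.span (Set.range l) := by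
    intro i
    have h1 : Φ (X i) = toPMap (π (Pi.single i (1:E))) := by rw [hΦ, aeval_X]
    rw [h1, ← toPMap_single i, ← map_sub]
    have h2 : Pi.single i (1:E) - π (Pi.single i (1:E)) ∈ W' := hπW _
    -- toPMap of element of W' lies in the ideal
    have h3 : ∀ w ∈ W', toPMap w ∈ Ideal.span (Set.range l) := by
      intro w hw
      refine Submodule.span_induction ?_ ?_ ?_ ?_ hw
      · rintro x ⟨i, rfl⟩
        rw [toPMap_cvMap (hl i)]
        exact Ideal.subset_span ⟨i, rfl⟩
      · simpa using Ideal.zero_mem _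
      · intro x y _ _ hx hy; rw [map_add]; exact Ideal.add_mem _ hx hy
      · intro c x _ hx; rw [map_smul, smul_eq_C_mul]; exact Ideal.mul_mem_left _ _ hx
    exact h3 _ h2
  have hsub : ∀ p : MvPolynomial (Fin n) E, p - Φ p ∈ Ideal.span (Set.range l) := by
    intro p
    induction p using MvPolynomial.induction_on with
    | C a => rw [hΦ, aeval_C]; simp [algebraMap_eq]
    | add p q hp hq =>
        rw [map_add]
        have : p + q - (Φ p + Φ q) = (p - Φ p) + (q - Φ q) := by ring
        rw [this]; exact Ideal.add_mem _ hp hq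
    | mul_X p i hp =>
        rw [map_mul]
        have : p * X i - Φ p * Φ (X i) = (p - Φ p) * X i + Φ p * (X i - Φ (X i)) := by ring
        rw [this]
        exact Ideal.add_mem _ (Ideal.mul_mem_right _ _ hp)
          (Ideal.mul_mem_left _ _ (hXmem i))
  have hker : Ideal.span (Set.range l) = RingHom.ker (Φ : MvPolynomial (Fin n) E →+* MvPolynomial (Fin n) E) := by
    apply le_antisymm
    · rw [Ideal.span_le]
      rintro x ⟨i, rfl⟩
      show Φ (l i) = 0
      rw [hΦlin (l i) (hl i)]
      have : cvMap (l i) ∈ W' := Submodule.subset_span ⟨i, rfl⟩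
      rw [hπ0 _ this, map_zero]
    · intro x hx
      have hx0 : Φ x = 0 := hx
      have := hsub x
      rwa [hx0, sub_zero] at this
  rw [hker]
  exact RingHom.ker_isPrime _

lemma sliceRankLE_mono {f : MvPolynomial (Fin n) E} {r r' : ℕ} (h : r ≤ r')
    (hf : SliceRankLE f r) : SliceRankLE f r' := by
  obtain ⟨l, hl, hmem⟩ := hf
  refine ⟨fun i => if hi : (i : ℕ) < r then l ⟨i, hi⟩ else 0, fun i => ?_, ?_⟩
  · dsimp only
    split
    · exact hl _
    · exact isHomogeneous_zero _ _ _
  · refine Ideal.span_mono ?_ hmem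
    rintro x ⟨j, rfl⟩
    exact ⟨Fin.castLE h j, by simp [j.isLt]⟩

lemma slice_of_map_mem {d : ℕ} (τ τ' : E →+* E) (hττ' : ∀ x, τ' (τ x) = x)
    {f : MvPolynomial (Fin n) E}
    (l : Fin d → MvPolynomial (Fin n) E) (hl : ∀ i, (l i).IsHomogeneous 1)
    (hf : MvPolynomial.map τ f ∈ Ideal.span (Set.range l)) :
    SliceRankLE f d := by
  refine ⟨fun i => MvPolynomial.map τ' (l i), fun i => (hl i).map _, ?_⟩
  have hff : f = MvPolynomial.map τ' (MvPolynomial.map τ f) := by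
    rw [MvPolynomial.map_map]
    have : τ'.comp τ = RingHom.id E := by ext x; simp [hττ']
    rw [this, MvPolynomial.map_id]
  rw [hff]
  have := Ideal.mem_map_of_mem (MvPolynomial.map τ') hf
  rwa [Ideal.map_span, ← Set.range_comp] at this

end Aux

/-- Let `E/k` be Galois, `σ` in the Galois group, `q, q'` quadrics over `E` and `P` a
space of linear forms such that `q q' ≡ σ(q) σ(q') mod (P + σ(P))`.  If the ideal
`(q, P + σ(P))` is prime and `q, q'` each have slice rank greater than
`2 · dim(P + σ(P))`, then there is `c ∈ E*` with either
`σ(q) ≡ c q, σ(q') ≡ c⁻¹ q'` or `σ(q) ≡ c q', σ(q') ≡ c⁻¹ q` modulo `(P + σ(P))`. -/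
theorem galois_twist_of_quadric_factors {k E : Type*} [Field k] [Field E] [Algebra k E]
    [FiniteDimensional k E] [IsGalois k E] (hchar : ringChar E ≠ 2)
    (σ : E ≃ₐ[k] E) {n p : ℕ} (q q' : MvPolynomial (Fin n) E)
    (hq : q.IsHomogeneous 2) (hq' : q'.IsHomogeneous 2)
    (P : Fin p → MvPolynomial (Fin n) E) (hP : ∀ i, (P i).IsHomogeneous 1)
    (hcong : q * q' - MvPolynomial.map (σ : E →+* E) q * MvPolynomial.map (σ : E →+* E) q'
      ∈ Ideal.span (Set.range P ∪ Set.range (fun i => MvPolynomial.map (σ : E →+* E) (P i))))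
    (hprime : (Ideal.span ({q} ∪ Set.range P ∪
      Set.range (fun i => MvPolynomial.map (σ : E →+* E) (P i)))).IsPrime)
    (hsrkq : ¬ SliceRankLE q (2 * Module.finrank E (Submodule.span E
      (Set.range P ∪ Set.range (fun i => MvPolynomial.map (σ : E →+* E) (P i))))))
    (hsrkq' : ¬ SliceRankLE q' (2 * Module.finrank E (Submodule.span E
      (Set.range P ∪ Set.range (fun i => MvPolynomial.map (σ : E →+* E) (P i)))))) :
    ∃ c : E, c ≠ 0 ∧
      (let I := Ideal.span (Set.range P ∪
        Set.range (fun i => MvPolynomial.map (σ : E →+* E) (P i)));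
      (MvPolynomial.map (σ : E →+* E) q - c • q ∈ I ∧
        MvPolynomial.map (σ : E →+* E) q' - c⁻¹ • q' ∈ I) ∨
      (MvPolynomial.map (σ : E →+* E) q - c • q' ∈ I ∧
        MvPolynomial.map (σ : E →+* E) q' - c⁻¹ • q ∈ I)) := by
  classical
  set Sg : Set (MvPolynomial (Fin n) E) :=
    Set.range P ∪ Set.range (fun i => MvPolynomial.map (σ : E →+* E) (P i)) with hSg
  have hSh : ∀ x ∈ Sg, x.IsHomogeneous 1 := by
    rintro x (⟨i, rfl⟩ | ⟨i, rfl⟩)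
    · exact hP i
    · exact (hP i).map _
  have hfin : FiniteDimensional E (Submodule.span E Sg) := FiniteDimensional.span_of_finite E
    ((Set.finite_range P).union (Set.finite_range _))
  set dd := Module.finrank E (Submodule.span E Sg) with hdd
  set b := Module.finBasis E (Submodule.span E Sg) with hb
  set l : Fin dd → MvPolynomial (Fin n) E := fun i => ((b i : Submodule.span E Sg) :
    MvPolynomial (Fin n) E) with hlb
  have hl : ∀ i, (l i).IsHomogeneous 1 := by
    intro i
    have hWle : Submodule.span E Sg ≤ homogeneousSubmodule (Fin n) E 1 :=
      Submodule.span_le.2 (fun x hx => (mem_homogeneousSubmodule _ _).2 (hSh x hx))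
    exact (mem_homogeneousSubmodule _ _).1 (hWle (b i).2)
  have hWl : Submodule.span E Sg = Submodule.span E (Set.range l) := by
    conv_lhs => rw [← Submodule.map_subtype_top (Submodule.span E Sg), ← b.span_eq,
      Submodule.map_span, ← Set.range_comp]
    rfl
  set I : Ideal (MvPolynomial (Fin n) E) := Ideal.span Sg with hI
  have hIl : Ideal.span (Set.range l) = I := by
    apply le_antisymm
    · rw [Ideal.span_le]
      rintro x ⟨i, rfl⟩
      exact span_E_le_ideal (b i).2
    · rw [hI, Ideal.span_le]
      intro x hx
      exact span_E_le_ideal (hWl ▸ Submodule.subset_span hx)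
  have hIp : I.IsPrime := hIl ▸ span_linear_isPrime l hl
  have hqnotI : q ∉ I := fun hq0 =>
    hsrkq (sliceRankLE_mono (by omega) ⟨l, hl, hIl.symm ▸ hq0⟩)
  have htrans : ∀ f : MvPolynomial (Fin n) E,
      MvPolynomial.map (σ : E →+* E) f ∈ I → SliceRankLE f dd := fun f hf =>
    slice_of_map_mem (σ : E →+* E) (σ.symm : E →+* E) (fun x => σ.symm_apply_apply x)
      l hl (hIl.symm ▸ hf)
  have hprime' : (Ideal.span {q} ⊔ I).IsPrime := by
    have : Ideal.span ({q} ∪ Set.range P ∪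
        Set.range (fun i => MvPolynomial.map (σ : E →+* E) (P i)))
        = Ideal.span {q} ⊔ I := by
      rw [Set.union_assoc, Ideal.span_union]
    rwa [this] at hprime
  have hqq' : MvPolynomial.map (σ : E →+* E) q * MvPolynomial.map (σ : E →+* E) q'
      ∈ Ideal.span {q} ⊔ I := by
    have h1 : q * q' ∈ Ideal.span {q} ⊔ I :=
      Submodule.mem_sup_left (Ideal.mul_mem_right _ _ (Ideal.mem_span_singleton_self q))
    have h2 := (Submodule.mem_sup_right hcong : _ ∈ Ideal.span {q} ⊔ I)
    have := sub_mem h1 h2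
    simpa using this
  rcases hprime'.mem_or_mem hqq' with hcase | hcase
  · -- σ(q) ∈ (q) ⊔ I
    obtain ⟨c, hc⟩ := extract_const l hl q (MvPolynomial.map (σ : E →+* E) q) hq (hq.map _)
      (hIl.symm ▸ hcase)
    have hcI : MvPolynomial.map (σ : E →+* E) q - c • q ∈ I := hIl ▸ hc
    have hc0 : c ≠ 0 := by
      rintro rfl
      rw [zero_smul, sub_zero] at hcI
      exact hsrkq (sliceRankLE_mono (by omega) (htrans q hcI))
    have hkey : q * (q' - c • MvPolynomial.map (σ : E →+* E) q') ∈ I := by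
      have heq : q * (q' - c • MvPolynomial.map (σ : E →+* E) q')
          = (q * q' - MvPolynomial.map (σ : E →+* E) q * MvPolynomial.map (σ : E →+* E) q')
            + (MvPolynomial.map (σ : E →+* E) q - c • q) * MvPolynomial.map (σ : E →+* E) q' := by
        rw [smul_eq_C_mul, smul_eq_C_mul]; ring
      rw [heq]
      exact Ideal.add_mem _ hcong (Ideal.mul_mem_right _ _ hcI)
    rcases hIp.mem_or_mem hkey with h | h
    · exact absurd h hqnotI
    have h2 : MvPolynomial.map (σ : E →+* E) q' - c⁻¹ • q' ∈ I := by
      have hCc : (C c⁻¹ : MvPolynomial (Fin n) E) * C c = 1 := by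
        rw [← C_mul, inv_mul_cancel₀ hc0, C_1]
      have heq : MvPolynomial.map (σ : E →+* E) q' - c⁻¹ • q'
          = (-c⁻¹) • (q' - c • MvPolynomial.map (σ : E →+* E) q') := by
        rw [smul_eq_C_mul, smul_eq_C_mul, smul_eq_C_mul, map_neg]
        linear_combination (-(MvPolynomial.map (σ : E →+* E) q')) * hCc
      rw [heq, smul_eq_C_mul]
      exact Ideal.mul_mem_left _ _ h
    exact ⟨c, hc0, Or.inl ⟨hcI, h2⟩⟩
  · -- σ(q') ∈ (q) ⊔ I
    obtain ⟨c, hc⟩ := extract_const l hl q (MvPolynomial.map (σ : E →+* E) q') hq (hq'.map _)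
      (hIl.symm ▸ hcase)
    have hcI : MvPolynomial.map (σ : E →+* E) q' - c • q ∈ I := hIl ▸ hc
    have hc0 : c ≠ 0 := by
      rintro rfl
      rw [zero_smul, sub_zero] at hcI
      exact hsrkq' (sliceRankLE_mono (by omega) (htrans q' hcI))
    have hkey : q * (q' - c • MvPolynomial.map (σ : E →+* E) q) ∈ I := by
      have heq : q * (q' - c • MvPolynomial.map (σ : E →+* E) q)
          = (q * q' - MvPolynomial.map (σ : E →+* E) q * MvPolynomial.map (σ : E →+* E) q')
            + (MvPolynomial.map (σ : E →+* E) q' - c • q) * MvPolynomial.map (σ : E →+* E) q := by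
        rw [smul_eq_C_mul, smul_eq_C_mul]; ring
      rw [heq]
      exact Ideal.add_mem _ hcong (Ideal.mul_mem_right _ _ hcI)
    rcases hIp.mem_or_mem hkey with h | h
    · exact absurd h hqnotI
    have h2 : MvPolynomial.map (σ : E →+* E) q - c⁻¹ • q' ∈ I := by
      have hCc : (C c⁻¹ : MvPolynomial (Fin n) E) * C c = 1 := by
        rw [← C_mul, inv_mul_cancel₀ hc0, C_1]
      have heq : MvPolynomial.map (σ : E →+* E) q - c⁻¹ • q'
          = (-c⁻¹) • (q' - c • MvPolynomial.map (σ : E →+* E) q) := by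
        rw [smul_eq_C_mul, smul_eq_C_mul, smul_eq_C_mul, map_neg]
        linear_combination (-(MvPolynomial.map (σ : E →+* E) q)) * hCc
      rw [heq, smul_eq_C_mul]
      exact Ideal.mul_mem_left _ _ h
    refine ⟨c⁻¹, inv_ne_zero hc0, Or.inr ⟨h2, ?_⟩⟩
    rw [inv_inv]
    exact hcI
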